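/- Define f_1(n) = ((n+144)/30)·6^{(n-6)/5} for 14 ≤ n ≤ 30 and f_1(n) = ((n-1)/5)·6^{(n-6)/5} for n ≥ 31. Then f_1 is monotonically increasing on integers n ≥ 14, and moreover f_1(n-1) + f_1(n-t) < f_1(n) whenever n-1 ≥ 14, n-t ≥ 14 and t ≥ 4. -/
import Mathlib


/-- The auxiliary function `f₁` defined for `n ≥ 14`. -/
noncomputable def f1 (n : ℕ) : ℝ :=
  if n ≤ 30 then (((n : ℝ) + 144) / 30) * (6 : ℝ) ^ (((n : ℝ) - 6) / 5)
  else (((n : ℝ) - 1) / 5) * (6 : ℝ) ^ (((n : ℝ) - 6) / 5)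

lemma a_pos : (0:ℝ) < (6:ℝ) ^ ((1:ℝ)/5) := Real.rpow_pos_of_pos (by norm_num) _

lemma a_pow5 : ((6:ℝ) ^ ((1:ℝ)/5)) ^ (5:ℕ) = 6 := by
  rw [← Real.rpow_natCast ((6:ℝ) ^ ((1:ℝ)/5)) 5, ← Real.rpow_mul (by norm_num : (0:ℝ) ≤ 6)]
  norm_num

lemma a_lb : (1.4309:ℝ) < (6:ℝ) ^ ((1:ℝ)/5) := by
  by_contra h
  push_neg at h
  have h5 := pow_le_pow_left₀ a_pos.le h 5
  rw [a_pow5] at h5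
  norm_num at h5

lemma a_ub : (6:ℝ) ^ ((1:ℝ)/5) < 1.4311 := by
  by_contra h
  push_neg at h
  have h5 := pow_le_pow_left₀ (by norm_num : (0:ℝ) ≤ 1.4311) h 5
  rw [a_pow5] at h5
  norm_num at h5

lemma a_ge1 : (1:ℝ) ≤ (6:ℝ) ^ ((1:ℝ)/5) := le_trans (by norm_num) a_lb.le

lemma a3_ub : ((6:ℝ) ^ ((1:ℝ)/5)) ^ (3:ℕ) ≤ 2.94 := by
  calc ((6:ℝ) ^ ((1:ℝ)/5)) ^ (3:ℕ) ≤ (1.4311:ℝ) ^ (3:ℕ) :=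
        pow_le_pow_left₀ a_pos.le a_ub.le 3
    _ ≤ 2.94 := by norm_num

lemma a4_lb : (4.19:ℝ) ≤ ((6:ℝ) ^ ((1:ℝ)/5)) ^ (4:ℕ) := by
  calc (4.19:ℝ) ≤ (1.4309:ℝ) ^ (4:ℕ) := by norm_num
    _ ≤ ((6:ℝ) ^ ((1:ℝ)/5)) ^ (4:ℕ) :=
        pow_le_pow_left₀ (by norm_num) a_lb.le 4

lemma six_rpow_split (x : ℝ) (k : ℕ) :
    (6:ℝ) ^ ((x + k - 6)/5) = (6:ℝ) ^ ((x - 6)/5) * ((6:ℝ) ^ ((1:ℝ)/5)) ^ k := by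
  rw [← Real.rpow_natCast ((6:ℝ) ^ ((1:ℝ)/5)) k, ← Real.rpow_mul (by norm_num : (0:ℝ) ≤ 6),
      ← Real.rpow_add (by norm_num : (0:ℝ) < 6)]
  congr 1
  ring

lemma f1_step (n : ℕ) (hn : 14 ≤ n) : f1 n ≤ f1 (n + 1) := by
  have h6 : (0:ℝ) < 6 := by norm_num
  set a : ℝ := (6:ℝ) ^ ((1:ℝ)/5) with ha_def
  have ha1 : (1:ℝ) ≤ a := a_ge1
  have hX : (0:ℝ) < (6:ℝ) ^ (((n:ℝ) - 6)/5) := Real.rpow_pos_of_pos h6 _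
  have hn' : (14:ℝ) ≤ (n:ℝ) := by exact_mod_cast hn
  have hsplit : (6:ℝ) ^ (((n:ℝ) + 1 - 6)/5) = (6:ℝ) ^ (((n:ℝ) - 6)/5) * a := by
    have h := six_rpow_split (n:ℝ) 1
    rw [pow_one] at h
    push_cast at h
    exact h
  simp only [f1]
  by_cases h1 : n + 1 ≤ 30
  · rw [if_pos (by omega : n ≤ 30), if_pos h1]
    push_cast
    rw [hsplit]
    nlinarith [mul_nonneg (mul_nonneg (by linarith : (0:ℝ) ≤ (n:ℝ) + 145) hX.le)
      (by linarith : (0:ℝ) ≤ a - 1), hX]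
  · by_cases h0 : n ≤ 30
    · have h30 : (n:ℝ) = 30 := by
        have : n = 30 := by omega
        exact_mod_cast congrArg (Nat.cast : ℕ → ℝ) this
      rw [if_pos h0, if_neg h1]
      push_cast
      rw [hsplit]
      nlinarith [mul_nonneg hX.le (by linarith : (0:ℝ) ≤ a - 1), hX, h30]
    · rw [if_neg h0, if_neg h1]
      push_cast
      rw [hsplit]
      nlinarith [mul_nonneg (mul_nonneg (by linarith : (0:ℝ) ≤ (n:ℝ)) hX.le)
        (by linarith : (0:ℝ) ≤ a - 1), hX]

lemma f1_mono (m n : ℕ) (hm : 14 ≤ m) (hmn : m ≤ n) : f1 m ≤ f1 n := by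
  induction n, hmn using Nat.le_induction with
  | base => exact le_refl _
  | succ n hn ih => exact ih.trans (f1_step n (hm.trans hn))

lemma f1_key (m : ℕ) (hm : 14 ≤ m) : f1 (m + 3) + f1 m < f1 (m + 4) := by
  have h6 : (0:ℝ) < 6 := by norm_num
  set a : ℝ := (6:ℝ) ^ ((1:ℝ)/5) with ha_def
  have ha0 : (0:ℝ) < a := a_pos
  have ha3 : a ^ (3:ℕ) ≤ 2.94 := a3_ub
  have ha4 : (4.19:ℝ) ≤ a ^ (4:ℕ) := a4_lb
  set X : ℝ := (6:ℝ) ^ (((m:ℝ) - 6)/5) with hX_def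
  have hX : (0:ℝ) < X := Real.rpow_pos_of_pos h6 _
  have hm' : (14:ℝ) ≤ (m:ℝ) := by exact_mod_cast hm
  have h3 : (6:ℝ) ^ (((m:ℝ) + 3 - 6)/5) = X * a ^ (3:ℕ) := by
    have h := six_rpow_split (m:ℝ) 3
    push_cast at h
    exact h
  have h4 : (6:ℝ) ^ (((m:ℝ) + 4 - 6)/5) = X * a ^ (4:ℕ) := by
    have h := six_rpow_split (m:ℝ) 4
    push_cast at h
    exact h
  have hXa3 : X * a ^ (3:ℕ) ≤ X * 2.94 := mul_le_mul_of_nonneg_left ha3 hX.le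
  have hXa4 : X * 4.19 ≤ X * a ^ (4:ℕ) := mul_le_mul_of_nonneg_left ha4 hX.le
  simp only [f1]
  by_cases hc4 : m + 4 ≤ 30
  · rw [if_pos (by omega : m + 3 ≤ 30), if_pos (by omega : m ≤ 30), if_pos hc4]
    push_cast
    rw [h3, h4]
    nlinarith [mul_nonneg hX.le (by linarith : (0:ℝ) ≤ (m:ℝ) - 14),
      mul_le_mul_of_nonneg_left hXa3 (by linarith : (0:ℝ) ≤ ((m:ℝ) + 147)/30),
      mul_le_mul_of_nonneg_left hXa4 (by linarith : (0:ℝ) ≤ ((m:ℝ) + 148)/30), hX]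
  · by_cases hc3 : m + 3 ≤ 30
    · have h27 : (m:ℝ) = 27 := by
        have : m = 27 := by omega
        exact_mod_cast congrArg (Nat.cast : ℕ → ℝ) this
      rw [if_pos hc3, if_pos (by omega : m ≤ 30), if_neg hc4]
      push_cast
      rw [h3, h4]
      nlinarith [hXa3, hXa4, hX, h27]
    · by_cases hc0 : m ≤ 30
      · rw [if_neg hc3, if_pos hc0, if_neg hc4]
        push_cast
        rw [h3, h4]
        have hm28 : (28:ℝ) ≤ (m:ℝ) := by
          have : 28 ≤ m := by omega
          exact_mod_cast this
        nlinarith [mul_nonneg hX.le (by linarith : (0:ℝ) ≤ (m:ℝ) - 28),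
          mul_le_mul_of_nonneg_left hXa3 (by linarith : (0:ℝ) ≤ ((m:ℝ) + 2)/5),
          mul_le_mul_of_nonneg_left hXa4 (by linarith : (0:ℝ) ≤ ((m:ℝ) + 3)/5), hX]
      · rw [if_neg hc3, if_neg hc0, if_neg hc4]
        push_cast
        rw [h3, h4]
        nlinarith [mul_nonneg hX.le (by linarith : (0:ℝ) ≤ (m:ℝ) - 14),
          mul_le_mul_of_nonneg_left hXa3 (by linarith : (0:ℝ) ≤ ((m:ℝ) + 2)/5),
          mul_le_mul_of_nonneg_left hXa4 (by linarith : (0:ℝ) ≤ ((m:ℝ) + 3)/5), hX]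

theorem f1_monotone_and_superadditive :
    (∀ m n : ℕ, 14 ≤ m → m ≤ n → f1 m ≤ f1 n) ∧
    (∀ n t : ℕ, 4 ≤ t → 14 ≤ n - 1 → 14 ≤ n - t → f1 (n - 1) + f1 (n - t) < f1 n) := by
  constructor
  · exact f1_mono
  · intro n t ht h1 h2
    have hn : 18 ≤ n := by omega
    have e1 : n - 1 = (n - 4) + 3 := by omega
    have e2 : n = (n - 4) + 4 := by omega
    have h5 : f1 (n - t) ≤ f1 (n - 4) := f1_mono _ _ h2 (by omega)
    have h7 := f1_key (n - 4) (by omega)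
    calc f1 (n - 1) + f1 (n - t) ≤ f1 ((n - 4) + 3) + f1 (n - 4) := by rw [e1]; linarith
      _ < f1 ((n - 4) + 4) := h7
      _ = f1 n := by rw [← e2]
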